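/- The function v₂ is an actual solution at infinity: Let q ∈ ℂ with 0 < |q| < 1 and let a₁, a₂, b₁ ∈ ℂ* with qa₂/a₁ ∉ {q^{−m} : m ≥ 0}. Define v₂(x) = (θ_q(a₂x)/θ_q(x)) · ∑_{n≥0} (qa₂/b₁;q)_n (b₁/(a₁a₂x))^n / ((qa₂/a₁;q)_n (q;q)_n). Then for every x ∈ ℂ with |x| > |b₁/(a₁a₂q²)| and x ∉ −q^ℤ: (b₁/q² − a₁a₂x)·v₂(q²x) − (1/q − (a₁+a₂)x)·v₂(qx) − x·v₂(x) = 0. -/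

import Mathlib

open scoped BigOperators

/-- The finite q-Pochhammer symbol `(a;q)_n` for `n : ℕ`. -/
noncomputable def qPochN (q a : ℂ) (n : ℕ) : ℂ :=
  ∏ k ∈ Finset.range n, (1 - a * q ^ k)

/-- The infinite q-Pochhammer symbol `(a;q)_∞`. -/
noncomputable def qPochInf (q a : ℂ) : ℂ :=
  ∏' k : ℕ, (1 - a * q ^ k)

/-- The bilateral q-Pochhammer symbol `(a;q)_n` for `n : ℤ`. -/
noncomputable def qPochZ (q a : ℂ) (n : ℤ) : ℂ :=
  if 0 ≤ n then ∏ k ∈ Finset.range n.toNat, (1 - a * q ^ k)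
  else (∏ k ∈ Finset.range (-n).toNat, (1 - a * q ^ (-((k : ℤ) + 1))))⁻¹

/-- The Jacobi theta function `θ_q(x) = ∑_{n ∈ ℤ} q^{n(n-1)/2} x^n`. -/
noncomputable def theta (q x : ℂ) : ℂ :=
  ∑' n : ℤ, q ^ (n * (n - 1) / 2) * x ^ n


/-- The unilateral solution around infinity. -/
noncomputable def vSol (q a₁ a₂ b₁ x : ℂ) : ℂ :=
  (theta q (a₁ * x) / theta q x) *
    ∑' n : ℕ, qPochN q (q * a₁ / b₁) n * (b₁ / (a₁ * a₂ * x)) ^ n /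
      (qPochN q (q * a₁ / a₂) n * qPochN q q n)

section Aux

open Filter

private lemma theta_shift' (q x : ℂ) (hq : q ≠ 0) (hx : x ≠ 0) :
    theta q (q * x) = x⁻¹ * theta q x := by
  have h1 : ∀ n : ℤ, q ^ (n * (n - 1) / 2) * (q * x) ^ n
      = q ^ ((n + 1) * ((n + 1) - 1) / 2) * x ^ ((n + 1) - 1) := by
    intro n
    have he : (2:ℤ) ∣ n * (n - 1) := by
      rcases Int.even_or_odd n with h | h
      · exact Dvd.dvd.mul_right h.two_dvd _
      · obtain ⟨k, hk⟩ := h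
        exact Dvd.dvd.mul_left ⟨k, by omega⟩ _
    have hk2 : (n + 1) * ((n + 1) - 1) = n * (n - 1) + 2 * n := by ring
    obtain ⟨k, hk⟩ := he
    have he2 : n * (n - 1) / 2 + n = (n + 1) * ((n + 1) - 1) / 2 := by
      rw [hk2, hk]; omega
    rw [mul_zpow, ← mul_assoc, ← zpow_add₀ hq, he2]
    congr 2
    omega
  have h2 : theta q (q * x)
      = ∑' n : ℤ, q ^ ((n + 1) * ((n + 1) - 1) / 2) * x ^ ((n + 1) - 1) :=
    tsum_congr h1
  rw [h2]
  have h3 := (Equiv.addRight (1:ℤ)).tsum_eq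
    (fun m : ℤ => q ^ (m * (m - 1) / 2) * x ^ (m - 1))
  simp only [Equiv.coe_addRight] at h3
  rw [h3]
  have h4 : ∀ m : ℤ, q ^ (m * (m - 1) / 2) * x ^ (m - 1)
      = x⁻¹ * (q ^ (m * (m - 1) / 2) * x ^ m) := by
    intro m
    rw [zpow_sub_one₀ hx]
    ring
  rw [tsum_congr h4, tsum_mul_left]
  rfl

private lemma theta_ratio' (q a x : ℂ) (hq : q ≠ 0) (ha : a ≠ 0) (hx : x ≠ 0) :
    theta q (a * (q * x)) / theta q (q * x) = a⁻¹ * (theta q (a * x) / theta q x) := by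
  have h1 : theta q (a * (q * x)) = (a * x)⁻¹ * theta q (a * x) := by
    rw [show a * (q * x) = q * (a * x) by ring, theta_shift' q (a * x) hq (mul_ne_zero ha hx)]
  rw [h1, theta_shift' q x hq hx, mul_div_mul_comm]
  congr 1
  field_simp

private lemma qPochN_succ' (q a : ℂ) (n : ℕ) :
    qPochN q a (n + 1) = qPochN q a n * (1 - a * q ^ n) :=
  Finset.prod_range_succ _ _

private lemma one_sub_q_pow_ne' (q : ℂ) (hq1 : ‖q‖ < 1) (n : ℕ) :
    1 - q * q ^ n ≠ 0 := by
  intro h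
  have h2 : q * q ^ n = 1 := by linear_combination -h
  have := congrArg (‖·‖) h2
  rw [norm_mul, norm_pow, norm_one] at this
  nlinarith [pow_le_one₀ (norm_nonneg q) hq1.le (n := n), norm_nonneg q,
    pow_nonneg (norm_nonneg q) n]

private lemma summable_series' (q A B : ℂ) (hq1 : ‖q‖ < 1)
    (hB : ∀ n : ℕ, 1 - B * q ^ n ≠ 0) (s : ℂ) (hs : ‖s‖ < 1) :
    Summable (fun n : ℕ =>
      qPochN q A n / (qPochN q B n * qPochN q q n) * s ^ n) := by
  have hQB : ∀ n, qPochN q B n ≠ 0 := fun n =>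
    Finset.prod_ne_zero_iff.mpr fun k _ => hB k
  have hQq : ∀ n, qPochN q q n ≠ 0 := fun n =>
    Finset.prod_ne_zero_iff.mpr fun k _ => one_sub_q_pow_ne' q hq1 k
  by_cases hA0 : ∃ N : ℕ, 1 - A * q ^ N = 0
  · obtain ⟨N, hN⟩ := hA0
    apply summable_of_ne_finset_zero (s := Finset.range (N + 1))
    intro n hn
    have hnN : N ∈ Finset.range n := by
      simp only [Finset.mem_range] at hn ⊢; omega
    have : qPochN q A n = 0 := Finset.prod_eq_zero hnN hN
    rw [this, zero_div, zero_mul]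
  · push_neg at hA0
    by_cases hs0 : s = 0
    · apply summable_of_ne_finset_zero (s := Finset.range 1)
      intro n hn
      have : n ≠ 0 := by simpa using hn
      rw [hs0, zero_pow this, mul_zero]
    · have hne : ∀ n : ℕ, qPochN q A n / (qPochN q B n * qPochN q q n) * s ^ n ≠ 0 := by
        intro n
        exact mul_ne_zero (div_ne_zero (Finset.prod_ne_zero_iff.mpr fun k _ => hA0 k)
          (mul_ne_zero (hQB n) (hQq n))) (pow_ne_zero n hs0)
      apply summable_of_ratio_test_tendsto_lt_one hs (Eventually.of_forall hne)
      set f : ℕ → ℂ := fun n => qPochN q A n / (qPochN q B n * qPochN q q n) * s ^ n with hf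
      have key : ∀ n : ℕ, f (n + 1) / f n
          = (1 - A * q ^ n) * s / ((1 - B * q ^ n) * (1 - q * q ^ n)) := by
        intro n
        rw [hf]
        simp only
        rw [div_eq_iff (hne n)]
        simp only [qPochN_succ', pow_succ]
        field_simp [hQB n, hQq n, hB n, one_sub_q_pow_ne' q hq1 n]
      have hqlim : Tendsto (fun n : ℕ => q ^ n) atTop (nhds 0) :=
        tendsto_pow_atTop_nhds_zero_of_norm_lt_one (by simpa using hq1)
      have hlim : Tendsto (fun n : ℕ => f (n + 1) / f n) atTop (nhds s) := by
        rw [funext key]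
        have hnum : Tendsto (fun n : ℕ => (1 - A * q ^ n) * s) atTop
            (nhds ((1 - A * 0) * s)) :=
          ((tendsto_const_nhds.sub (tendsto_const_nhds.mul hqlim)).mul tendsto_const_nhds)
        have hden : Tendsto (fun n : ℕ => (1 - B * q ^ n) * (1 - q * q ^ n)) atTop
            (nhds ((1 - B * 0) * (1 - q * 0))) :=
          (tendsto_const_nhds.sub (tendsto_const_nhds.mul hqlim)).mul
            (tendsto_const_nhds.sub (tendsto_const_nhds.mul hqlim))
        have := hnum.div hden (by norm_num)
        simpa [Pi.div_def] using this
      have := hlim.norm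
      convert this using 2 with n
      rw [← norm_div]

private lemma step_succ' (q a₁ a₂ b₁ x t cn cn1 : ℂ) (n : ℕ)
    (ha₁ : a₁ ≠ 0) (hq : q ≠ 0)
    (hxt : x * t * (a₂ * a₁) = b₁)
    (hrec : cn * (b₁ - q * a₂ * q ^ n) * a₁
      = cn1 * ((1 - q * q ^ n) * ((a₁ - q * a₂ * q ^ n) * b₁))) :
    (b₁ - a₁ * a₂ * x * q ^ 2) * (cn1 * (t / q ^ 2) ^ (n + 1))
      - ((q - (a₁ + a₂) * x * q ^ 2) * a₂) * (cn1 * (t / q) ^ (n + 1))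
      - (a₂ ^ 2 * q ^ 2 * x) * (cn1 * t ^ (n + 1))
    = (a₂ * q * (cn * (t / q) ^ n) - b₁ * (cn * (t / q ^ 2) ^ n))
      - (a₂ * q * (cn1 * (t / q) ^ (n + 1)) - b₁ * (cn1 * (t / q ^ 2) ^ (n + 1))) := by
  have H1 : q ^ 2 * (t / q ^ 2) = t := by field_simp
  have H2 : q * (t / q) = t := by field_simp
  have HY : (t / q) ^ n = q ^ n * (t / q ^ 2) ^ n := by
    rw [← mul_pow]; congr 1; field_simp
  have HX : t ^ n = q ^ n * (t / q) ^ n := by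
    rw [← mul_pow]; congr 1; field_simp
  refine mul_left_cancel₀ ha₁ ?_
  linear_combination ((t / q ^ 2) ^ n) * hrec
    + (-(x * a₁ ^ 2 * a₂ * cn1 * (t / q ^ 2) ^ n)) * H1
    + (q * x * a₁ * a₂ ^ 2 * cn1 * (t / q) ^ n + q * x * a₁ ^ 2 * a₂ * cn1 * (t / q) ^ n) * H2
    + (-(q ^ 2 * t * x * a₁ * a₂ ^ 2 * cn1)) * HX
    + (-(q * a₁ * a₂ * cn) + q * t * x * a₁ * a₂ ^ 2 * cn1 + q * t * x * a₁ ^ 2 * a₂ * cn1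
        - q ^ 2 * t * x * a₁ * a₂ ^ 2 * cn1 * q ^ n) * HY
    + (-(a₁ * cn1 * (t / q ^ 2) ^ n) + q * a₂ * cn1 * q ^ n * (t / q ^ 2) ^ n
        + q * a₁ * cn1 * q ^ n * (t / q ^ 2) ^ n
        - q ^ 2 * a₂ * cn1 * (q ^ n) ^ 2 * (t / q ^ 2) ^ n) * hxt

private lemma assemble' (q a₁ a₂ b₁ x Rx F₀ F₁ F₂ : ℂ) (ha₂ : a₂ ≠ 0) (hq : q ≠ 0)
    (h : (b₁ - a₁ * a₂ * x * q ^ 2) * F₂ - ((q - (a₁ + a₂) * x * q ^ 2) * a₂) * F₁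
      - (a₂ ^ 2 * q ^ 2 * x) * F₀ = 0) :
    (b₁ / q ^ 2 - a₁ * a₂ * x) * (a₂⁻¹ * (a₂⁻¹ * Rx) * F₂)
      - (1 / q - (a₁ + a₂) * x) * (a₂⁻¹ * Rx * F₁) - x * (Rx * F₀) = 0 := by
  have h2 : (b₁ / q ^ 2 - a₁ * a₂ * x) * (a₂⁻¹ * (a₂⁻¹ * Rx) * F₂)
      - (1 / q - (a₁ + a₂) * x) * (a₂⁻¹ * Rx * F₁) - x * (Rx * F₀)
      = Rx / (a₂ ^ 2 * q ^ 2) * ((b₁ - a₁ * a₂ * x * q ^ 2) * F₂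
        - ((q - (a₁ + a₂) * x * q ^ 2) * a₂) * F₁ - (a₂ ^ 2 * q ^ 2 * x) * F₀) := by
    field_simp
  rw [h2, h, mul_zero]

end Aux

/-- `v₂` (i.e. `vSol` with `a₁` and `a₂` interchanged) is an actual solution of the
q-difference equation near infinity. -/
theorem v2_solution_at_infinity (q a₁ a₂ b₁ : ℂ)
    (hq0 : 0 < ‖q‖) (hq1 : ‖q‖ < 1)
    (ha₁ : a₁ ≠ 0) (ha₂ : a₂ ≠ 0) (hb₁ : b₁ ≠ 0)
    (haa : ∀ m : ℕ, q * a₂ / a₁ ≠ q ^ (-(m : ℤ))) :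
    ∀ x : ℂ, ‖b₁ / (a₁ * a₂ * q ^ 2)‖ < ‖x‖ → (∀ k : ℤ, x ≠ -q ^ k) →
      (b₁ / q ^ 2 - a₁ * a₂ * x) * vSol q a₂ a₁ b₁ (q ^ 2 * x)
        - (1 / q - (a₁ + a₂) * x) * vSol q a₂ a₁ b₁ (q * x)
        - x * vSol q a₂ a₁ b₁ x = 0 := by
  intro x hxlt _hxq
  have hq : q ≠ 0 := by
    intro h; rw [h] at hq0; simp at hq0
  have hx : x ≠ 0 := by
    intro h
    rw [h] at hxlt
    simp only [norm_zero] at hxlt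
    exact (norm_nonneg _).not_gt hxlt
  have hxpos : 0 < ‖x‖ := lt_of_le_of_lt (norm_nonneg _) hxlt
  -- the coefficient sequence
  set c : ℕ → ℂ := fun n =>
    qPochN q (q * a₂ / b₁) n / (qPochN q (q * a₂ / a₁) n * qPochN q q n) with hc_def
  have hB : ∀ n : ℕ, 1 - (q * a₂ / a₁) * q ^ n ≠ 0 := by
    intro n h
    apply haa n
    have h2 : q ^ n * (q * a₂ / a₁) = 1 := by linear_combination -h
    rw [zpow_neg, zpow_natCast]
    exact eq_inv_of_mul_eq_one_left (by linear_combination h2)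
  have hQB : ∀ n, qPochN q (q * a₂ / a₁) n ≠ 0 := fun n =>
    Finset.prod_ne_zero_iff.mpr fun k _ => hB k
  have hQq : ∀ n, qPochN q q n ≠ 0 := fun n =>
    Finset.prod_ne_zero_iff.mpr fun k _ => one_sub_q_pow_ne' q hq1 k
  -- the variable t
  set t : ℂ := b₁ / (a₂ * a₁ * x) with ht_def
  have hD : a₂ * a₁ * x ≠ 0 := mul_ne_zero (mul_ne_zero ha₂ ha₁) hx
  have hxt : x * t * (a₂ * a₁) = b₁ := by
    rw [ht_def, ← mul_div_assoc, div_mul_eq_mul_div, div_eq_iff hD]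
    ring
  -- bounds
  have heq2 : t / q ^ 2 = b₁ / (a₁ * a₂ * q ^ 2) / x := by
    rw [ht_def, div_div, div_div, show a₂ * a₁ * x * q ^ 2 = a₁ * a₂ * q ^ 2 * x by ring]
  have habs2 : ‖t / q ^ 2‖ < 1 := by
    rw [heq2, norm_div, div_lt_one hxpos]
    exact hxlt
  have habs1 : ‖t / q‖ < 1 := by
    have he : t / q = t / q ^ 2 * q := by field_simp
    rw [he, norm_mul]
    calc ‖t / q ^ 2‖ * ‖q‖ < 1 * 1 :=
      mul_lt_mul'' habs2 hq1 (norm_nonneg _) (norm_nonneg _)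
    _ = 1 := by norm_num
  have habs0 : ‖t‖ < 1 := by
    have he : t = t / q * q := by field_simp
    rw [he, norm_mul]
    calc ‖t / q‖ * ‖q‖ < 1 * 1 :=
      mul_lt_mul'' habs1 hq1 (norm_nonneg _) (norm_nonneg _)
    _ = 1 := by norm_num
  -- summability
  have hsum : ∀ s : ℂ, ‖s‖ < 1 → Summable (fun n : ℕ => c n * s ^ n) := by
    intro s hs
    have := summable_series' q (q * a₂ / b₁) (q * a₂ / a₁) hq1 hB s hs
    exact this.congr fun n => by rw [hc_def]
  have hsum2 := hsum _ habs2
  have hsum1 := hsum _ habs1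
  have hsum0 := hsum _ habs0
  -- the recurrence
  have hrec : ∀ n : ℕ, c n * (b₁ - q * a₂ * q ^ n) * a₁
      = c (n + 1) * ((1 - q * q ^ n) * ((a₁ - q * a₂ * q ^ n) * b₁)) := by
    intro n
    have hb' : b₁ - q * a₂ * q ^ n = b₁ * (1 - q * a₂ / b₁ * q ^ n) := by
      field_simp
    have ha' : a₁ - q * a₂ * q ^ n = a₁ * (1 - q * a₂ / a₁ * q ^ n) := by
      field_simp
    have hD2 : qPochN q (q * a₂ / a₁) n * (1 - q * a₂ / a₁ * q ^ n)
        * (qPochN q q n * (1 - q * q ^ n)) ≠ 0 :=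
      mul_ne_zero (mul_ne_zero (hQB n) (hB n))
        (mul_ne_zero (hQq n) (one_sub_q_pow_ne' q hq1 n))
    rw [hc_def]
    simp only
    rw [qPochN_succ', qPochN_succ', qPochN_succ', div_mul_eq_mul_div, div_mul_eq_mul_div,
      div_mul_eq_mul_div, div_eq_div_iff (mul_ne_zero (hQB n) (hQq n)) hD2]
    linear_combination
      (qPochN q (q * a₂ / b₁) n * a₁ * (qPochN q (q * a₂ / a₁) n * (1 - q * a₂ / a₁ * q ^ n)
        * (qPochN q q n * (1 - q * q ^ n)))) * hb'
      - (qPochN q (q * a₂ / b₁) n * (1 - q * a₂ / b₁ * q ^ n) * (1 - q * q ^ n) * b₁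
        * (qPochN q (q * a₂ / a₁) n * qPochN q q n)) * ha'
  have hc0 : c 0 = 1 := by
    rw [hc_def]; simp [qPochN]
  -- the telescoping sequence
  set u : ℕ → ℂ := fun n =>
    (b₁ - a₁ * a₂ * x * q ^ 2) * (c n * (t / q ^ 2) ^ n)
      - ((q - (a₁ + a₂) * x * q ^ 2) * a₂) * (c n * (t / q) ^ n)
      - (a₂ ^ 2 * q ^ 2 * x) * (c n * t ^ n) with hu_def
  set g : ℕ → ℂ := fun n => if n = 0 then 0 else
    a₂ * q * (c (n - 1) * (t / q) ^ (n - 1)) - b₁ * (c (n - 1) * (t / q ^ 2) ^ (n - 1))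
    with hg_def
  have hg_succ : ∀ m : ℕ, g (m + 1)
      = a₂ * q * (c m * (t / q) ^ m) - b₁ * (c m * (t / q ^ 2) ^ m) := by
    intro m
    rw [hg_def]
    simp
  have hg_zero : g 0 = 0 := by simp [hg_def]
  have hus : Summable u :=
    ((hsum2.mul_left _).sub (hsum1.mul_left _)).sub (hsum0.mul_left _)
  have htel : ∀ n : ℕ, u n = g n - g (n + 1) := by
    intro n
    cases n with
    | zero =>
      rw [hg_zero, hg_succ 0]
      simp only [hu_def, hc0, pow_zero, mul_one]
      ring
    | succ n =>
      rw [hg_succ n, hg_succ (n + 1)]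
      simp only [hu_def]
      exact step_succ' q a₁ a₂ b₁ x t (c n) (c (n + 1)) n ha₁ hq hxt (hrec n)
  -- g tends to zero
  have hgz : Filter.Tendsto g Filter.atTop (nhds 0) := by
    rw [← Filter.tendsto_add_atTop_iff_nat 1, funext hg_succ]
    have h1 : Filter.Tendsto (fun n : ℕ => a₂ * q * (c n * (t / q) ^ n))
        Filter.atTop (nhds (a₂ * q * 0)) :=
      hsum1.tendsto_atTop_zero.const_mul _
    have h2 : Filter.Tendsto (fun n : ℕ => b₁ * (c n * (t / q ^ 2) ^ n))
        Filter.atTop (nhds (b₁ * 0)) :=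
      hsum2.tendsto_atTop_zero.const_mul _
    have := h1.sub h2
    simpa using this
  -- the tsum of u is zero
  have htsum_u : ∑' n : ℕ, u n = 0 := by
    have hpart : ∀ N : ℕ, ∑ n ∈ Finset.range N, u n = g 0 - g N := by
      intro N
      rw [Finset.sum_congr rfl fun n _ => htel n]
      exact Finset.sum_range_sub' g N
    have h1 : Filter.Tendsto (fun N : ℕ => ∑ n ∈ Finset.range N, u n)
        Filter.atTop (nhds (∑' n, u n)) := hus.hasSum.tendsto_sum_nat
    have h2 : Filter.Tendsto (fun N : ℕ => ∑ n ∈ Finset.range N, u n)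
        Filter.atTop (nhds 0) := by
      rw [funext hpart]
      have := (tendsto_const_nhds (x := g 0) (f := Filter.atTop (α := ℕ))).sub hgz
      simpa [hg_zero] using this
    exact tendsto_nhds_unique h1 h2
  -- the combined series identity
  have htsum : (b₁ - a₁ * a₂ * x * q ^ 2) * (∑' n : ℕ, c n * (t / q ^ 2) ^ n)
      - ((q - (a₁ + a₂) * x * q ^ 2) * a₂) * (∑' n : ℕ, c n * (t / q) ^ n)
      - (a₂ ^ 2 * q ^ 2 * x) * (∑' n : ℕ, c n * t ^ n) = 0 := by
    rw [← tsum_mul_left, ← tsum_mul_left, ← tsum_mul_left,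
      ← Summable.tsum_sub (hsum2.mul_left _) (hsum1.mul_left _),
      ← Summable.tsum_sub ((hsum2.mul_left _).sub (hsum1.mul_left _)) (hsum0.mul_left _)]
    exact htsum_u
  -- rewrite vSol
  have ev : ∀ X : ℂ, vSol q a₂ a₁ b₁ X
      = theta q (a₂ * X) / theta q X * ∑' n : ℕ, c n * (b₁ / (a₂ * a₁ * X)) ^ n := by
    intro X
    unfold vSol
    congr 1
    exact tsum_congr fun n => by rw [hc_def]; ring
  have harg0 : b₁ / (a₂ * a₁ * x) = t := ht_def.symm
  have harg1 : b₁ / (a₂ * a₁ * (q * x)) = t / q := by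
    rw [ht_def, div_div, show a₂ * a₁ * x * q = a₂ * a₁ * (q * x) by ring]
  have harg2 : b₁ / (a₂ * a₁ * (q ^ 2 * x)) = t / q ^ 2 := by
    rw [ht_def, div_div, show a₂ * a₁ * x * q ^ 2 = a₂ * a₁ * (q ^ 2 * x) by ring]
  have hθ1 : theta q (a₂ * (q * x)) / theta q (q * x)
      = a₂⁻¹ * (theta q (a₂ * x) / theta q x) := theta_ratio' q a₂ x hq ha₂ hx
  have hθ2 : theta q (a₂ * (q ^ 2 * x)) / theta q (q ^ 2 * x)
      = a₂⁻¹ * (a₂⁻¹ * (theta q (a₂ * x) / theta q x)) := by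
    have h := theta_ratio' q a₂ (q * x) hq ha₂ (mul_ne_zero hq hx)
    rw [show a₂ * (q ^ 2 * x) = a₂ * (q * (q * x)) by ring,
      show (q : ℂ) ^ 2 * x = q * (q * x) by ring, h, hθ1]
  rw [ev x, ev (q * x), ev (q ^ 2 * x), harg0, harg1, harg2, hθ1, hθ2]
  exact assemble' q a₁ a₂ b₁ x (theta q (a₂ * x) / theta q x) _ _ _ ha₂ hq htsum
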